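/- arXiv:1904.12373 — 3 statements merged into one kernel-verified Lean document; each statement's English description precedes it below -/
import Mathlib

section
/- For every positive integer r, one has (2r/e)^r < (2r)! / (2^r · r!) < √2 · (2r/e)^r, where e is Euler's number. -/
open Stirling Real

lemma strict_dec (n : ℕ) : stirlingSeq (n + 2) < stirlingSeq (n + 1) := by
  have h := log_stirlingSeq_diff_hasSum n
  have h0 := le_hasSum h 0 (fun i _ => by positivity)
  have hpos : (0:ℝ) < (1 : ℝ) / (2 * ((0:ℕ) + 1 : ℕ) + 1) * ((1 / (2 * ((n:ℕ) + 1 : ℕ) + 1)) ^ 2) ^ ((0:ℕ)+1 : ℕ) := by positivity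
  have hlog : log (stirlingSeq (n + 2)) < log (stirlingSeq (n + 1)) := by linarith
  exact (Real.log_lt_log_iff (stirlingSeq'_pos (n+1)) (stirlingSeq'_pos n)).mp hlog

lemma strict_anti' {a b : ℕ} (ha : 0 < a) (hab : a < b) : stirlingSeq b < stirlingSeq a := by
  obtain ⟨a', rfl⟩ := Nat.exists_eq_succ_of_ne_zero ha.ne'
  obtain ⟨b', rfl⟩ := Nat.exists_eq_succ_of_ne_zero (by omega : b ≠ 0)
  calc stirlingSeq (b' + 1) ≤ stirlingSeq (a' + 2) := by
        have := stirlingSeq'_antitone (show a' + 1 ≤ b' by omega)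
        simpa using this
    _ < stirlingSeq (a' + 1) := strict_dec a'

lemma sqrt_pi_le (n : ℕ) : Real.sqrt Real.pi ≤ stirlingSeq (n + 1) := by
  have ht : Filter.Tendsto (stirlingSeq ∘ Nat.succ) Filter.atTop (nhds (Real.sqrt Real.pi)) := by
    have : (stirlingSeq ∘ Nat.succ) = fun n => stirlingSeq (n + 1) := rfl
    rw [this, Filter.tendsto_add_atTop_iff_nat 1]
    exact tendsto_stirlingSeq_sqrt_pi
  exact stirlingSeq'_antitone.le_of_tendsto ht n

lemma key_id (r : ℕ) (hr : 0 < r) :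
    ((2 * r).factorial : ℝ) / (2 ^ r * (r.factorial : ℝ)) =
    Real.sqrt 2 * (stirlingSeq (2 * r) / stirlingSeq r) * (2 * (r : ℝ) / Real.exp 1) ^ r := by
  have hn : (0:ℝ) < r := by exact_mod_cast hr
  have he : (0:ℝ) < Real.exp 1 := Real.exp_pos 1
  have hs2 : (0:ℝ) < Real.sqrt (2 * r) := Real.sqrt_pos.mpr (by positivity)
  have h4 : Real.sqrt (2 * ((2:ℝ) * r)) = Real.sqrt 2 * Real.sqrt (2 * r) :=
    Real.sqrt_mul (by norm_num) _
  have hfac : (0:ℝ) < (r.factorial : ℝ) := by exact_mod_cast r.factorial_pos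
  set E := Real.exp 1 with hE
  rw [stirlingSeq, stirlingSeq]
  push_cast
  rw [h4]
  rw [div_div_div_eq, pow_mul]
  have hpow : ((2:ℝ) * r / Real.exp 1) ^ r ≠ 0 := by positivity
  field_simp
  have h1 : Real.exp (r:ℝ) = E ^ r := by rw [hE, ← Real.exp_nat_mul, mul_one]
  have h2 : Real.exp 2 = E ^ 2 := by
    rw [hE, ← Real.exp_nat_mul, mul_one]; norm_num
  rw [hE, ← mul_pow, ← mul_pow]
  congr 1
  ring_nf
  rw [show (4:ℝ) ^ r = 2 ^ (r * 2) by rw [mul_comm, pow_mul]; norm_num]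

theorem stmt5 (r : ℕ) (hr : 0 < r) :
    (2 * (r : ℝ) / Real.exp 1) ^ r <
        ((2 * r).factorial : ℝ) / (2 ^ r * (r.factorial : ℝ)) ∧
      ((2 * r).factorial : ℝ) / (2 ^ r * (r.factorial : ℝ)) <
        Real.sqrt 2 * (2 * (r : ℝ) / Real.exp 1) ^ r := by
  have hn : (0:ℝ) < r := by exact_mod_cast hr
  have hA : (0:ℝ) < (2 * (r : ℝ) / Real.exp 1) ^ r := by positivity
  have hsr : 0 < stirlingSeq r := by
    obtain ⟨r', rfl⟩ := Nat.exists_eq_succ_of_ne_zero hr.ne'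
    exact stirlingSeq'_pos r'
  have hs2r : 0 < stirlingSeq (2 * r) := by
    have h2r : 2 * r = (2 * r - 1) + 1 := by omega
    rw [h2r]; exact stirlingSeq'_pos _
  have hmono : stirlingSeq r ≤ stirlingSeq 1 := by
    obtain ⟨r', rfl⟩ := Nat.exists_eq_succ_of_ne_zero hr.ne'
    exact stirlingSeq'_antitone (Nat.zero_le r')
  have hpi2r : Real.sqrt Real.pi ≤ stirlingSeq (2 * r) := by
    have h2r : 2 * r = (2 * r - 1) + 1 := by omega
    rw [h2r]; exact sqrt_pi_le _
  have hsq2 : (0:ℝ) < Real.sqrt 2 := Real.sqrt_pos.mpr (by norm_num)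
  have h22 : Real.sqrt 2 * Real.sqrt 2 = 2 := Real.mul_self_sqrt (by norm_num)
  have hpi : (1.7:ℝ) < Real.sqrt Real.pi := by
    rw [show (1.7:ℝ) = Real.sqrt (1.7^2) from (Real.sqrt_sq (by norm_num)).symm]
    exact Real.sqrt_lt_sqrt (by positivity) (by nlinarith [Real.pi_gt_d6])
  have hlt : stirlingSeq r < Real.sqrt 2 * stirlingSeq (2 * r) := by
    calc stirlingSeq r ≤ stirlingSeq 1 := hmono
      _ = Real.exp 1 / Real.sqrt 2 := stirlingSeq_one
      _ < Real.sqrt 2 * Real.sqrt Real.pi := by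
          rw [div_lt_iff₀ hsq2]
          calc Real.exp 1 < 2.7182818286 := Real.exp_one_lt_d9
            _ < 2 * 1.7 := by norm_num
            _ < 2 * Real.sqrt Real.pi := by linarith
            _ = Real.sqrt 2 * Real.sqrt Real.pi * Real.sqrt 2 := by
                rw [show Real.sqrt 2 * Real.sqrt Real.pi * Real.sqrt 2
                  = (Real.sqrt 2 * Real.sqrt 2) * Real.sqrt Real.pi by ring, h22]
      _ ≤ Real.sqrt 2 * stirlingSeq (2 * r) := by
          exact mul_le_mul_of_nonneg_left hpi2r hsq2.le
  rw [key_id r hr]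
  constructor
  · rw [lt_mul_iff_one_lt_left hA, mul_div_assoc' (Real.sqrt 2), lt_div_iff₀ hsr, one_mul]
    exact hlt
  · refine mul_lt_mul_of_pos_right ?_ hA
    have hrat : stirlingSeq (2 * r) / stirlingSeq r < 1 := by
      rw [div_lt_one hsr]
      exact strict_anti' hr (by omega)
    calc Real.sqrt 2 * (stirlingSeq (2 * r) / stirlingSeq r) < Real.sqrt 2 * 1 :=
          mul_lt_mul_of_pos_left hrat hsq2
      _ = Real.sqrt 2 := mul_one _
end

section
/- Let p be an odd prime, H ∈ (0,p) a real number, h ≥ 2 an integer, and set X = H/h. For integers 0 ≤ t < q ≤ X with gcd(t,q) = 1, define the intervals I(q,t) = ( tp/q, (tp+H)/q − h + 1 ] and J(q,t) = [ (tp−H)/q, tp/q − h + 1 ). If X ≥ 2 and 2HX < p, then the intervals I(q,t) and J(q,t), over all such pairs (q,t), are pairwise disjoint subsets of [−H, p−H). -/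
/-- The Burgess interval `I(q,t) = ( tp/q, (tp+H)/q − h + 1 ]`. -/
def burgessI (p h : ℕ) (H : ℝ) (q t : ℕ) : Set ℝ :=
  Set.Ioc ((t * p : ℝ) / q) ((t * p + H) / q - h + 1)

/-- The Burgess interval `J(q,t) = [ (tp−H)/q, tp/q − h + 1 )`. -/
def burgessJ (p h : ℕ) (H : ℝ) (q t : ℕ) : Set ℝ :=
  Set.Ico (((t * p : ℝ) - H) / q) ((t * p : ℝ) / q - h + 1)

/-- Any point of `I(q,t)` or `J(q,t)` is within `H/q` of `tp/q`, and on the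
correct side of it. -/
lemma burgess_bounds (p h : ℕ) (H : ℝ) (hH : 0 < H) (hh : 1 ≤ h) (q t : ℕ) (hq : 0 < q)
    (b : Bool) (z : ℝ)
    (hz : z ∈ (if b then burgessI p h H q t else burgessJ p h H q t)) :
    ((t * p : ℝ) / q - H / q ≤ z ∧ z ≤ (t * p : ℝ) / q + H / q) ∧
      (b = true → (t * p : ℝ) / q < z) ∧ (b = false → z < (t * p : ℝ) / q) := by
  have hq0 : (0:ℝ) < q := by exact_mod_cast hq
  have hHq : 0 ≤ H / q := le_of_lt (div_pos hH hq0)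
  have hh1 : (1:ℝ) ≤ h := by exact_mod_cast hh
  cases b with
  | true =>
      simp only [if_pos, burgessI, Set.mem_Ioc] at hz
      obtain ⟨h1, h2⟩ := hz
      have hsum : ((t * p : ℝ) + H) / q = (t * p : ℝ) / q + H / q := add_div _ _ _
      refine ⟨⟨by linarith, by linarith [hsum ▸ h2]⟩, fun _ => h1, fun hb => by simp at hb⟩
  | false =>
      simp only [if_neg, burgessJ, Set.mem_Ico, Bool.false_eq_true, not_false_iff] at hz
      obtain ⟨h1, h2⟩ := hz
      have hsub : ((t * p : ℝ) - H) / q = (t * p : ℝ) / q - H / q := sub_div _ _ _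
      refine ⟨⟨by linarith [hsub ▸ h1], by linarith⟩, fun hb => by simp at hb, fun _ => by linarith⟩

theorem stmt11 (p : ℕ) (hp : p.Prime) (hodd : p ≠ 2)
    (H : ℝ) (hH0 : 0 < H) (hHp : H < p) (h : ℕ) (hh : 2 ≤ h)
    (X : ℝ) (hX : X = H / h) (hX2 : 2 ≤ X) (hHX : 2 * H * X < p) :
    (∀ q t : ℕ, t < q → (q : ℝ) ≤ X → Nat.gcd t q = 1 →
        burgessI p h H q t ⊆ Set.Ico (-H) ((p : ℝ) - H) ∧
        burgessJ p h H q t ⊆ Set.Ico (-H) ((p : ℝ) - H)) ∧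
      Set.PairwiseDisjoint
        {x : ℕ × ℕ × Bool | x.2.1 < x.1 ∧ (x.1 : ℝ) ≤ X ∧ Nat.gcd x.2.1 x.1 = 1}
        (fun x => if x.2.2 then burgessI p h H x.1 x.2.1 else burgessJ p h H x.1 x.2.1) := by
  have hp1 : (1:ℝ) ≤ p := by exact_mod_cast hp.one_lt.le
  have hh2 : (2:ℝ) ≤ h := by exact_mod_cast hh
  have hh0 : (0:ℝ) < h := by linarith
  have hHX' : H = X * h := by rw [hX]; field_simp
  constructor
  · -- containment
    intro q t htq hqX hgcd
    have hqn : 0 < q := by omega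
    have hq0 : (0:ℝ) < q := by exact_mod_cast hqn
    have ht01 : (t:ℝ) ≤ (q:ℝ) - 1 := by
      have : (t:ℝ) + 1 ≤ q := by exact_mod_cast htq
      linarith
    have ht0 : (0:ℝ) ≤ t := Nat.cast_nonneg t
    have hq1 : (1:ℝ) ≤ q := by
      have : (1:ℕ) ≤ q := Nat.one_le_of_lt (Nat.lt_of_le_of_lt (Nat.zero_le t) htq)
      exact_mod_cast this
    constructor
    · intro z hz
      simp only [burgessI, Set.mem_Ioc] at hz
      obtain ⟨h1, h2⟩ := hz
      have hc0 : (0:ℝ) ≤ (t * p : ℝ) / q := div_nonneg (by positivity) (le_of_lt hq0)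
      constructor
      · linarith
      · -- z ≤ (tp+H)/q - h + 1 < p - H
        have hub : ((t:ℝ) * p + H) / q - h + 1 < (p:ℝ) - H := by
          rw [div_sub' (ne_of_gt hq0), div_add' _ _ _ (ne_of_gt hq0),
            div_lt_iff₀ hq0]
          nlinarith [mul_le_mul_of_nonneg_left hqX (le_of_lt hH0),
            mul_nonneg hH0.le (by linarith : (0:ℝ) ≤ X - 1),
            mul_nonneg (sub_nonneg.2 hh2) hq0.le,
            mul_le_mul_of_nonneg_right ht01 (by linarith : (0:ℝ) ≤ (p:ℝ))]
        linarith
    · intro z hz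
      simp only [burgessJ, Set.mem_Ico] at hz
      obtain ⟨h1, h2⟩ := hz
      constructor
      · have : -H ≤ ((t:ℝ) * p - H) / q := by
          rw [le_div_iff₀ hq0]
          nlinarith [mul_nonneg ht0 (by linarith : (0:ℝ) ≤ (p:ℝ))]
        linarith
      · have hub : (t:ℝ) * p / q - h + 1 ≤ (p:ℝ) - H := by
          rw [div_sub' (ne_of_gt hq0), div_add' _ _ _ (ne_of_gt hq0),
            div_le_iff₀ hq0]
          nlinarith [mul_le_mul_of_nonneg_left hqX (le_of_lt hH0),
            mul_le_mul_of_nonneg_right ht01 (by linarith : (0:ℝ) ≤ (p:ℝ)),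
            mul_nonneg (sub_nonneg.2 hh2) hq0.le]
        linarith
  · -- pairwise disjoint
    intro x hx y hy hxy
    obtain ⟨q, t, b⟩ := x
    obtain ⟨q', t', b'⟩ := y
    simp only [Set.mem_setOf_eq] at hx hy
    obtain ⟨htq, hqX, hgcd⟩ := hx
    obtain ⟨htq', hqX', hgcd'⟩ := hy
    have hqpos : 0 < q := Nat.pos_of_ne_zero (fun hq => by omega)
    have hqpos' : 0 < q' := Nat.pos_of_ne_zero (fun hq => by omega)
    have hq0 : (0:ℝ) < q := by exact_mod_cast hqpos
    have hq0' : (0:ℝ) < q' := by exact_mod_cast hqpos'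
    rw [Function.onFun]
    rw [Set.disjoint_left]
    intro z hz1 hz2
    simp only at hz1 hz2
    have B1 := burgess_bounds p h H hH0 (by omega) q t hqpos b z hz1
    have B2 := burgess_bounds p h H hH0 (by omega) q' t' hqpos' b' z hz2
    by_cases hsame : q = q' ∧ t = t'
    · obtain ⟨rfl, rfl⟩ := hsame
      have hbb : b ≠ b' := by
        intro hb; exact hxy (by rw [hb])
      cases b with
      | true =>
          have hb' : b' = false := by
            cases b' with
            | true => exact absurd rfl hbb
            | false => rfl
          have l1 := B1.2.1 rfl
          have l2 := B2.2.2 hb'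
          linarith
      | false =>
          have hb' : b' = true := by
            cases b' with
            | true => rfl
            | false => exact absurd rfl hbb
          have l1 := B1.2.2 rfl
          have l2 := B2.2.1 hb'
          linarith
    · -- distinct reduced fractions
      have hne : (t : ℤ) * q' ≠ (t' : ℤ) * q := by
        intro heq
        have heqn : t * q' = t' * q := by exact_mod_cast heq
        have h1 : q ∣ q' := by
          have : q ∣ t * q' := ⟨t', by linarith [heqn]⟩
          exact (Nat.Coprime.symm hgcd).dvd_of_dvd_mul_left this
        have h2 : q' ∣ q := by
          have : q' ∣ t' * q := ⟨t, by linarith [heqn]⟩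
          exact (Nat.Coprime.symm hgcd').dvd_of_dvd_mul_left this
        have hqq : q = q' := Nat.dvd_antisymm h1 h2
        subst hqq
        have htt : t = t' := by
          have := heqn
          exact Nat.eq_of_mul_eq_mul_right hqpos this
        exact hsame ⟨rfl, htt⟩
      have habs : (1:ℝ) ≤ |(t:ℝ) * q' - (t':ℝ) * q| := by
        have h1 : (1:ℤ) ≤ |(t:ℤ) * q' - (t':ℤ) * q| :=
          Int.one_le_abs (sub_ne_zero.2 hne)
        exact_mod_cast h1
      -- |c - c'| ≥ p/(q q')
      have hcc : (t * p : ℝ) / q - (t' * p : ℝ) / q' =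
          (p : ℝ) * ((t:ℝ) * q' - (t':ℝ) * q) / (q * q') := by
        field_simp
      have hgap : (p:ℝ) / (q * q') ≤ |(t * p : ℝ) / q - (t' * p : ℝ) / q'| := by
        rw [hcc, abs_div, abs_mul, abs_of_pos (by positivity : (0:ℝ) < (q:ℝ) * q'),
          abs_of_nonneg (by positivity : (0:ℝ) ≤ (p:ℝ))]
        exact div_le_div_of_nonneg_right
          (le_mul_of_one_le_right (by positivity) habs) (by positivity)
      have htri : |(t * p : ℝ) / q - (t' * p : ℝ) / q'| ≤ H / q + H / q' := by
        have b1l := B1.1.1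
        have b1r := B1.1.2
        have b2l := B2.1.1
        have b2r := B2.1.2
        rw [abs_sub_le_iff]
        constructor <;> linarith
      have hsum : H / q + H / q' = (H * q' + H * q) / (q * q') := by
        field_simp
      have e1 : H * q ≤ H * X := mul_le_mul_of_nonneg_left hqX hH0.le
      have e2 : H * q' ≤ H * X := mul_le_mul_of_nonneg_left hqX' hH0.le
      have hfin : (p:ℝ) / (q * q') ≤ (H * q' + H * q) / (q * q') := by
        rw [← hsum]; linarith
      have hfin2 : (p:ℝ) ≤ H * q' + H * q :=
        (div_le_div_iff_of_pos_right (by positivity : (0:ℝ) < (q:ℝ) * q')).1 hfin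
      linarith
end

section
/- Let p be an odd prime, let e be an even divisor of p−1, and let p_1, …, p_s be the distinct primes dividing p−1 that do not divide e. Set δ = 1 − Σ_{i=1}^{s} 1/p_i and assume δ > 0. Let f(n) be the indicator function of primitive roots modulo p and θ(n) = φ(n)/n. Then for every integer n not divisible by p, f(n)/(δ·θ(e)) ≥ 1 + (1/δ)·Σ_{i=1}^{s} θ(p_i) · Σ_{d | e} (μ(p_i d)/φ(p_i d)) · Σ_{χ : ord(χ) = p_i d} χ(n) + Σ_{d | e, d > 1} (μ(d)/φ(d)) · Σ_{χ : ord(χ) = d} χ(n), where the innermost sums run over Dirichlet characters χ modulo p of exact multiplicative order p_i d (respectively d), and the left-hand inequality is between real numbers (the right-hand side is real). -/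
-- `charOrderSum p k n` is the sum of `χ(n)` over all Dirichlet characters `χ`
-- modulo `p` of exact multiplicative order `k`.
open Classical in
noncomputable def charOrderSum (p : ℕ) [NeZero p] (k : ℕ) (n : ℤ) : ℂ :=
  ∑ χ ∈ Finset.univ.filter (fun χ : DirichletCharacter ℂ p => orderOf χ = k),
    χ (n : ZMod p)


open Finset in
private lemma dchar_card (p : ℕ) [hp : Fact p.Prime] :
    Fintype.card (DirichletCharacter ℂ p) = p - 1 := by
  rw [← Nat.card_eq_fintype_card, DirichletCharacter.card_eq_totient_of_hasEnoughRootsOfUnity,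
    Nat.totient_prime hp.out]

private lemma dchar_cyclic (p : ℕ) [hp : Fact p.Prime] :
    IsCyclic (DirichletCharacter ℂ p) := by
  obtain ⟨eqv⟩ := DirichletCharacter.mulEquiv_units ℂ p
  exact isCyclic_of_surjective eqv.symm eqv.symm.surjective

open Finset in
private lemma Tsum_eq (p : ℕ) [hp : Fact p.Prime] {k : ℕ} (hk : k ∣ p - 1) (α : ZMod p) :
    ∑ χ ∈ univ.filter (fun χ : DirichletCharacter ℂ p => orderOf χ ∣ k), χ α
      = if α ^ ((p - 1) / k) = 1 then (k : ℂ) else 0 := by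
  classical
  have hp2 := hp.out.two_le
  have hN : p - 1 ≠ 0 := by omega
  have hk0 : k ≠ 0 := by rintro rfl; exact hN (Nat.eq_zero_of_zero_dvd hk)
  have hsk : (p - 1) / k ≠ 0 := by
    rw [Nat.div_ne_zero_iff]; exact ⟨hk0, Nat.le_of_dvd (by omega) hk⟩
  have hcyc := dchar_cyclic p
  have hpow : ∀ χ : DirichletCharacter ℂ p, χ ^ (p - 1) = 1 := fun χ => by
    rw [← dchar_card p]; exact pow_card_eq_one
  have key : (∀ χ : DirichletCharacter ℂ p, orderOf χ ∣ k → χ α = 1)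
      ↔ α ^ ((p - 1) / k) = 1 := by
    constructor
    · intro h
      by_contra hne
      obtain ⟨χ, hχ⟩ := MulChar.exists_apply_ne_one_of_hasEnoughRootsOfUnity (ZMod p) ℂ hne
      have h1 : orderOf (χ ^ ((p - 1) / k)) ∣ k := by
        rw [orderOf_dvd_iff_pow_eq_one, ← pow_mul, Nat.div_mul_cancel hk]; exact hpow χ
      have h2 := h _ h1
      rw [MulChar.pow_apply' _ hsk, ← map_pow] at h2
      exact hχ h2
    · intro h χ hχ
      obtain ⟨Ψ, hΨ⟩ := hcyc.exists_generator
      have hmem : χ ∈ Submonoid.powers Ψ := by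
        rw [mem_powers_iff_mem_zpowers]; exact hΨ χ
      obtain ⟨j, rfl⟩ := hmem
      have hordΨ : orderOf Ψ = p - 1 := by
        rw [orderOf_eq_card_of_forall_mem_zpowers hΨ, Nat.card_eq_fintype_card, dchar_card p]
      have hd : (p - 1) ∣ j * k := by
        rw [← hordΨ, orderOf_dvd_iff_pow_eq_one, pow_mul]
        exact orderOf_dvd_iff_pow_eq_one.mp hχ
      have hsj : (p - 1) / k ∣ j := by
        have h1 : k * ((p - 1) / k) ∣ k * j := by
          rw [Nat.mul_div_cancel' hk, mul_comm k j]; exact hd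
        exact (Nat.mul_dvd_mul_iff_left (Nat.pos_of_ne_zero hk0)).mp h1
      obtain ⟨i, rfl⟩ := hsj
      calc (Ψ ^ ((p - 1) / k * i)) α = ((Ψ ^ i) ^ ((p - 1) / k)) α := by
              rw [← pow_mul, mul_comm]
        _ = ((Ψ ^ i) α) ^ ((p - 1) / k) := MulChar.pow_apply' _ hsk _
        _ = (Ψ ^ i) (α ^ ((p - 1) / k)) := (map_pow _ _ _).symm
        _ = 1 := by rw [h, map_one]
  by_cases hall : ∀ χ : DirichletCharacter ℂ p, orderOf χ ∣ k → χ α = 1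
  · rw [if_pos (key.mp hall)]
    rw [Finset.sum_congr rfl fun χ hχ => hall χ (Finset.mem_filter.mp hχ).2]
    rw [Finset.sum_const, nsmul_eq_mul, mul_one]
    congr 1
    -- card of the filter is k
    have h1 : ∑ d ∈ k.divisors,
        (univ.filter (fun χ : DirichletCharacter ℂ p => orderOf χ = d)).card
        = (univ.filter (fun χ : DirichletCharacter ℂ p => orderOf χ ∈ k.divisors)).card := by
      simpa using Finset.sum_fiberwise_eq_sum_filter univ k.divisors
        (fun χ : DirichletCharacter ℂ p => orderOf χ) (fun _ => (1 : ℕ))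
    have h2 : (univ.filter (fun χ : DirichletCharacter ℂ p => orderOf χ ∈ k.divisors))
        = (univ.filter (fun χ : DirichletCharacter ℂ p => orderOf χ ∣ k)) := by
      apply Finset.filter_congr
      intro χ _
      simp [Nat.mem_divisors, hk0]
    have h3 : ∀ d ∈ k.divisors,
        (univ.filter (fun χ : DirichletCharacter ℂ p => orderOf χ = d)).card = d.totient := by
      intro d hd
      have : d ∣ Fintype.card (DirichletCharacter ℂ p) := by
        rw [dchar_card p]; exact (Nat.mem_divisors.mp hd).1.trans hk
      exact hcyc.card_orderOf_eq_totient this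
    have h4 : ∑ d ∈ k.divisors, d.totient = k := Nat.sum_totient k
    have h5 : (univ.filter (fun χ : DirichletCharacter ℂ p => orderOf χ ∣ k)).card = k := by
      rw [← h2, ← h1, Finset.sum_congr rfl h3, h4]
    rw [h5]
  · push_neg at hall
    obtain ⟨χ₀, hχ₀k, hχ₀⟩ := hall
    rw [if_neg (fun h => hχ₀ (key.mpr h χ₀ hχ₀k))]
    set H := univ.filter (fun χ : DirichletCharacter ℂ p => orderOf χ ∣ k) with hH
    have hshift : ∑ χ ∈ H, χ α = ∑ χ ∈ H, (χ₀ * χ) α := by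
      apply Finset.sum_nbij' (fun χ => χ₀⁻¹ * χ) (fun χ => χ₀ * χ)
      · intro χ hχ
        simp only [hH, Finset.mem_filter, Finset.mem_univ, true_and] at *
        rw [orderOf_dvd_iff_pow_eq_one] at *
        rw [mul_pow, inv_pow, hχ₀k, hχ, inv_one, one_mul]
      · intro χ hχ
        simp only [hH, Finset.mem_filter, Finset.mem_univ, true_and] at *
        rw [orderOf_dvd_iff_pow_eq_one] at *
        rw [mul_pow, hχ₀k, hχ, one_mul]
      · intro χ _; rw [mul_inv_cancel_left]
      · intro χ _; rw [inv_mul_cancel_left]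
      · intro χ _; rw [mul_inv_cancel_left]
    have hmul : ∑ χ ∈ H, (χ₀ * χ) α = χ₀ α * ∑ χ ∈ H, χ α := by
      rw [Finset.mul_sum]
      exact Finset.sum_congr rfl fun χ _ => by rw [MulChar.mul_apply]
    have h0 : (χ₀ α - 1) * ∑ χ ∈ H, χ α = 0 := by
      rw [sub_mul, one_mul, ← hmul, ← hshift, sub_self]
    rcases mul_eq_zero.mp h0 with h | h
    · exact absurd (sub_eq_zero.mp h) hχ₀
    · exact h

open Classical in
open Finset in
private lemma charOrderSum_eq_prod (p : ℕ) [NeZero p] (hp : p.Prime) {d : ℕ} (hd : d ∣ p - 1)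
    (hsf : Squarefree d) (n : ℤ) (hα : (n : ZMod p) ≠ 0) :
    charOrderSum p d n = ∏ q ∈ d.primeFactors,
      ((if q ∣ (p - 1) / orderOf ((n : ZMod p)) then (q : ℂ) else 0) - 1) := by
  classical
  haveI : Fact p.Prime := ⟨hp⟩
  have hp2 := hp.two_le
  have hN : p - 1 ≠ 0 := by omega
  set α := ((n : ZMod p)) with hαdef
  set τ := orderOf α with hτ
  set u := (p - 1) / τ with hu
  have hτdvd : τ ∣ p - 1 := orderOf_dvd_of_pow_eq_one (ZMod.pow_card_sub_one_eq_one hα)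
  -- step 1 : inversion
  have fwd : ∀ k > 0, k ∈ {m : ℕ | m ∣ p - 1} →
      ∑ i ∈ k.divisors, charOrderSum p i n
        = (if α ^ ((p - 1) / k) = 1 then (k : ℂ) else 0) := by
    intro k hkpos hk
    rw [← Tsum_eq p hk α]
    have h1 := Finset.sum_fiberwise_eq_sum_filter univ k.divisors
      (fun χ : DirichletCharacter ℂ p => orderOf χ) (fun χ => χ α)
    have h2 : (univ.filter fun χ : DirichletCharacter ℂ p => orderOf χ ∈ k.divisors)
        = (univ.filter fun χ : DirichletCharacter ℂ p => orderOf χ ∣ k) := by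
      apply Finset.filter_congr; intro χ _; simp [Nat.mem_divisors, hkpos.ne']
    rw [h2] at h1
    rw [← h1]
    apply Finset.sum_congr rfl
    intro i _
    rw [charOrderSum]
  have hinv := (ArithmeticFunction.sum_eq_iff_sum_smul_moebius_eq_on {m : ℕ | m ∣ p - 1}
    (fun a b hab hb => hab.trans hb)).mp fwd d (Nat.pos_of_ne_zero hsf.ne_zero) hd
  rw [← hinv]
  -- step 2 : rewrite the antidiagonal sum as a sum over divisors
  rw [Nat.sum_divisorsAntidiagonal'
    (f := fun a b => (ArithmeticFunction.moebius a : ℤ) •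
      (if α ^ ((p - 1) / b) = 1 then (b : ℂ) else 0))]
  -- step 3 : replace the condition by divisibility into u
  have hcond : ∀ j ∈ d.divisors, (ArithmeticFunction.moebius (d / j) : ℤ) •
      (if α ^ ((p - 1) / j) = 1 then (j : ℂ) else 0)
      = (ArithmeticFunction.moebius (d / j) : ℤ) • (if j ∣ u then (j : ℂ) else 0) := by
    intro j hj
    have hjd : j ∣ p - 1 := (Nat.dvd_of_mem_divisors hj).trans hd
    congr 1
    have : (α ^ ((p - 1) / j) = 1) ↔ j ∣ u := by
      rw [← orderOf_dvd_iff_pow_eq_one, ← hτ, Nat.dvd_div_iff_mul_dvd hjd, hu,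
        Nat.dvd_div_iff_mul_dvd hτdvd, mul_comm]
    simp only [this]
  rw [Finset.sum_congr rfl hcond]
  -- step 4 : powerset
  rw [← Nat.divisors_filter_squarefree_of_squarefree hsf,
    Nat.sum_divisors_filter_squarefree hsf.ne_zero]
  have hfac : (UniqueFactorizationMonoid.normalizedFactors d).toFinset = d.primeFactors := by
    rw [Nat.factors_eq]; rfl
  rw [hfac]
  -- step 5 : evaluate each term
  have hQ : ∀ q ∈ d.primeFactors, q.Prime := fun q hq => Nat.prime_of_mem_primeFactors hq
  have hprodd : ∏ q ∈ d.primeFactors, q = d := Nat.prod_primeFactors_of_squarefree hsf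
  have hterm : ∀ T ∈ d.primeFactors.powerset,
      (ArithmeticFunction.moebius (d / T.val.prod) : ℤ) •
        (if T.val.prod ∣ u then (T.val.prod : ℂ) else 0)
      = (∏ q ∈ T, (if q ∣ u then (q : ℂ) else 0)) * ∏ q ∈ d.primeFactors \ T, (-1 : ℂ) := by
    intro T hT
    rw [Finset.mem_powerset] at hT
    have hTprime : ∀ q ∈ T, q.Prime := fun q hq => hQ q (hT hq)
    have hprodT : T.val.prod = ∏ q ∈ T, q := by simp [Finset.prod_val]
    have hπpos : 0 < ∏ q ∈ T, q :=
      Finset.prod_pos fun q hq => (hTprime q hq).pos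
    have hdiv : d / T.val.prod = ∏ q ∈ d.primeFactors \ T, q := by
      rw [hprodT]
      apply Nat.div_eq_of_eq_mul_left hπpos
      rw [Finset.prod_sdiff hT, hprodd]
    have hμ : (ArithmeticFunction.moebius (d / T.val.prod) : ℤ)
        = ∏ q ∈ d.primeFactors \ T, (-1 : ℤ) := by
      rw [hdiv, ArithmeticFunction.isMultiplicative_moebius.map_prod _ _ ?hpair]
      · exact Finset.prod_congr rfl fun q hq =>
          ArithmeticFunction.moebius_apply_prime (hQ q (Finset.mem_sdiff.mp hq).1)
      case hpair =>
        intro a ha b hb hab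
        exact (Nat.coprime_primes (hQ a (Finset.mem_sdiff.mp ha).1)
          (hQ b (Finset.mem_sdiff.mp hb).1)).mpr hab
    have hI : (if T.val.prod ∣ u then (T.val.prod : ℂ) else 0)
        = ∏ q ∈ T, (if q ∣ u then (q : ℂ) else 0) := by
      rw [hprodT]
      by_cases hall : ∀ q ∈ T, q ∣ u
      · rw [if_pos, Finset.prod_congr rfl fun q hq => if_pos (hall q hq)]
        · push_cast; rfl
        · exact Finset.prod_primes_dvd u (fun q hq => (hTprime q hq).prime)
            (fun q hq => hall q hq)
      · push_neg at hall
        obtain ⟨q₀, hq₀T, hq₀⟩ := hall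
        have h0 : (∏ q ∈ T, (if q ∣ u then (q : ℂ) else 0)) = 0 :=
          Finset.prod_eq_zero hq₀T (if_neg hq₀)
        rw [h0, if_neg]
        intro hdvd
        exact hq₀ ((Finset.dvd_prod_of_mem _ hq₀T).trans hdvd)
    rw [hμ, hI, zsmul_eq_mul]
    push_cast
    ring
  rw [Finset.sum_congr rfl hterm, ← Finset.prod_add]
  apply Finset.prod_congr rfl
  intro q _
  rw [sub_eq_add_neg]
open Finset in
private lemma squarefree_prod_primes {T : Finset ℕ} (h : ∀ q ∈ T, q.Prime) :
    Squarefree (∏ q ∈ T, q) := by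
  classical
  induction T using Finset.induction with
  | empty => simpa using squarefree_one
  | @insert a s ha ih =>
    rw [Finset.prod_insert ha]
    have hap : a.Prime := h a (Finset.mem_insert_self a s)
    have hcop : a.Coprime (∏ q ∈ s, q) := by
      rw [hap.coprime_iff_not_dvd]
      intro hdvd
      obtain ⟨r, hr, hdr⟩ := (Prime.dvd_finset_prod_iff hap.prime id).mp hdvd
      have : a = r := ((Nat.prime_dvd_prime_iff_eq hap (h r (Finset.mem_insert_of_mem hr))).mp hdr)
      exact ha (this ▸ hr)
    exact (Nat.squarefree_mul hcop).mpr
      ⟨hap.squarefree, ih fun q hq => h q (Finset.mem_insert_of_mem hq)⟩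

open Finset in
private lemma totient_prod_primes {T : Finset ℕ} (h : ∀ q ∈ T, q.Prime) :
    (∏ q ∈ T, q).totient = ∏ q ∈ T, (q - 1) := by
  classical
  induction T using Finset.induction with
  | empty => simp
  | @insert a s ha ih =>
    rw [Finset.prod_insert ha, Finset.prod_insert ha]
    have hap : a.Prime := h a (Finset.mem_insert_self a s)
    have hcop : a.Coprime (∏ q ∈ s, q) := by
      rw [hap.coprime_iff_not_dvd]
      intro hdvd
      obtain ⟨r, hr, hdr⟩ := (Prime.dvd_finset_prod_iff hap.prime id).mp hdvd
      have : a = r := ((Nat.prime_dvd_prime_iff_eq hap (h r (Finset.mem_insert_of_mem hr))).mp hdr)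
      exact ha (this ▸ hr)
    rw [Nat.totient_mul hcop, Nat.totient_prime hap,
      ih fun q hq => h q (Finset.mem_insert_of_mem hq)]

open Finset in
private lemma sumdiv (p : ℕ) [NeZero p] (hp : p.Prime) (n : ℤ) (hα : (n : ZMod p) ≠ 0)
    {e c : ℕ} (he : e ∣ p - 1) (he0 : e ≠ 0) (hc : Squarefree c) (hcdvd : c ∣ p - 1)
    (hcop : c.Coprime e) :
    ∑ d ∈ e.divisors, ((ArithmeticFunction.moebius (c * d) : ℂ) / ((c * d).totient)) *
        charOrderSum p (c * d) n
      = ((ArithmeticFunction.moebius c : ℂ) / (c.totient)) *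
          (∏ q ∈ c.primeFactors,
            ((if q ∣ (p - 1) / orderOf ((n : ZMod p)) then (q : ℂ) else 0) - 1)) *
          ∏ q ∈ e.primeFactors,
            (1 - ((if q ∣ (p - 1) / orderOf ((n : ZMod p)) then (q : ℂ) else 0) - 1)
              / ((q : ℂ) - 1)) := by
  classical
  set u := (p - 1) / orderOf ((n : ZMod p)) with hu
  set sv : ℕ → ℂ := fun q => (if q ∣ u then (q : ℂ) else 0) - 1 with hsv
  have hc0 : c ≠ 0 := hc.ne_zero
  have hstep1 : ∑ d ∈ e.divisors, ((ArithmeticFunction.moebius (c * d) : ℂ) / ((c * d).totient)) *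
        charOrderSum p (c * d) n
      = ∑ d ∈ e.divisors.filter Squarefree,
          ((ArithmeticFunction.moebius (c * d) : ℂ) / ((c * d).totient)) *
            charOrderSum p (c * d) n := by
    symm
    apply Finset.sum_filter_of_ne
    intro d hd hne
    by_contra hnsf
    apply hne
    have h1 : ¬ Squarefree (c * d) := fun h =>
      hnsf ((Nat.squarefree_mul (hcop.coprime_dvd_right (Nat.dvd_of_mem_divisors hd))).mp h).2
    rw [ArithmeticFunction.moebius_eq_zero_of_not_squarefree h1]
    push_cast
    rw [zero_div, zero_mul]
  rw [hstep1, Nat.sum_divisors_filter_squarefree he0]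
  have hfac : (UniqueFactorizationMonoid.normalizedFactors e).toFinset = e.primeFactors := by
    rw [Nat.factors_eq]; rfl
  rw [hfac]
  have hterm : ∀ T ∈ e.primeFactors.powerset,
      ((ArithmeticFunction.moebius (c * T.val.prod) : ℂ) / ((c * T.val.prod).totient)) *
          charOrderSum p (c * T.val.prod) n
      = (((ArithmeticFunction.moebius c : ℂ) / (c.totient)) * ∏ q ∈ c.primeFactors, sv q) *
          ∏ q ∈ T, (- sv q / ((q : ℂ) - 1)) := by
    intro T hT
    rw [Finset.mem_powerset] at hT
    have hTprime : ∀ q ∈ T, q.Prime := fun q hq => Nat.prime_of_mem_primeFactors (hT hq)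
    have hprodT : T.val.prod = ∏ q ∈ T, q := by simp [Finset.prod_val]
    rw [hprodT]
    set d := ∏ q ∈ T, q with hd
    have hdsf : Squarefree d := squarefree_prod_primes hTprime
    have hd0 : d ≠ 0 := hdsf.ne_zero
    have hde : d ∣ e :=
      (Finset.prod_dvd_prod_of_subset T e.primeFactors _ hT).trans (Nat.prod_primeFactors_dvd e)
    have hcopd : c.Coprime d := hcop.coprime_dvd_right hde
    have hcdsf : Squarefree (c * d) := (Nat.squarefree_mul hcopd).mpr ⟨hc, hdsf⟩
    have hcddvd : c * d ∣ p - 1 := hcopd.mul_dvd_of_dvd_of_dvd hcdvd (hde.trans he)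
    have hpFd : d.primeFactors = T := Nat.primeFactors_prod hTprime
    -- character sum value
    have hS : charOrderSum p (c * d) n = (∏ q ∈ c.primeFactors, sv q) * ∏ q ∈ T, sv q := by
      rw [charOrderSum_eq_prod p hp hcddvd hcdsf n hα, Nat.primeFactors_mul hc0 hd0, hpFd,
        Finset.prod_union (hcopd.disjoint_primeFactors.mono_right hpFd.ge)]
    -- moebius value
    have hμd : (ArithmeticFunction.moebius d : ℤ) = ∏ _q ∈ T, (-1 : ℤ) := by
      rw [hd, ArithmeticFunction.isMultiplicative_moebius.map_prod _ _ ?hpair]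
      · exact Finset.prod_congr rfl fun q hq =>
          ArithmeticFunction.moebius_apply_prime (hTprime q hq)
      case hpair =>
        intro a ha b hb hab
        exact (Nat.coprime_primes (hTprime a ha) (hTprime b hb)).mpr hab
    have hμ : (ArithmeticFunction.moebius (c * d) : ℤ)
        = ArithmeticFunction.moebius c * ∏ _q ∈ T, (-1 : ℤ) := by
      rw [ArithmeticFunction.isMultiplicative_moebius.map_mul_of_coprime hcopd, hμd]
    -- totient value
    have hφd : d.totient = ∏ q ∈ T, (q - 1) := totient_prod_primes hTprime
    have hφ : (c * d).totient = c.totient * ∏ q ∈ T, (q - 1) := by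
      rw [Nat.totient_mul hcopd, hφd]
    rw [hS, hμ, hφ]
    -- algebra
    have hφc : (c.totient : ℂ) ≠ 0 := by
      exact_mod_cast (Nat.totient_pos.mpr (Nat.pos_of_ne_zero hc0)).ne'
    have hcast : ((∏ q ∈ T, (q - 1) : ℕ) : ℂ) = ∏ q ∈ T, ((q : ℂ) - 1) := by
      push_cast
      exact Finset.prod_congr rfl fun q hq => by
        rw [Nat.cast_sub (hTprime q hq).one_lt.le, Nat.cast_one]
    have hπ : (∏ q ∈ T, ((q : ℂ) - 1)) ≠ 0 := by
      rw [Finset.prod_ne_zero_iff]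
      intro q hq
      have : (q : ℂ) ≠ 1 := by exact_mod_cast (hTprime q hq).one_lt.ne'
      exact sub_ne_zero.mpr this
    have hprodw : (∏ _q ∈ T, (-1 : ℂ)) * (∏ q ∈ T, sv q) / ∏ q ∈ T, ((q : ℂ) - 1)
        = ∏ q ∈ T, (- sv q / ((q : ℂ) - 1)) := by
      rw [← Finset.prod_mul_distrib, ← Finset.prod_div_distrib]
      exact Finset.prod_congr rfl fun q _ => by rw [neg_one_mul, neg_div]
    rw [← hprodw]
    push_cast [hcast]
    field_simp
  rw [Finset.sum_congr rfl hterm, ← Finset.mul_sum]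
  congr 1
  have h2 : ∏ q ∈ e.primeFactors, (- sv q / ((q : ℂ) - 1) + 1)
      = ∑ T ∈ e.primeFactors.powerset, ∏ q ∈ T, (- sv q / ((q : ℂ) - 1)) := by
    rw [Finset.prod_add]
    exact Finset.sum_congr rfl fun T _ => by rw [Finset.prod_const_one, mul_one]
  rw [← h2]
  exact Finset.prod_congr rfl fun q _ => by ring
open Finset in
open Classical in
theorem stmt17 (p : ℕ) (hp : p.Prime) (hodd : p ≠ 2)
    (e : ℕ) (he : e ∣ p - 1) (he2 : 2 ∣ e)
    (P : Finset ℕ) (hP : P = (p - 1).primeFactors.filter fun q => ¬ q ∣ e)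
    (s : ℕ) (hs : s = P.card)
    (δ : ℝ) (hδdef : δ = 1 - ∑ q ∈ P, (1 : ℝ) / q) (hδ : 0 < δ)
    (n : ℤ) (hn : ¬ (p : ℤ) ∣ n) :
    (1 + (1 / (δ : ℂ)) *
          ∑ q ∈ P, ((q.totient : ℂ) / q) *
            ∑ d ∈ e.divisors,
              ((ArithmeticFunction.moebius (q * d) : ℂ) / ((q * d).totient)) *
                @charOrderSum p ⟨hp.ne_zero⟩ (q * d) n
        + ∑ d ∈ e.divisors.filter (1 < ·),
            ((ArithmeticFunction.moebius d : ℂ) / (d.totient)) *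
              @charOrderSum p ⟨hp.ne_zero⟩ d n).re ≤
      (if orderOf ((n : ZMod p)) = p - 1 then (1 : ℝ) else 0) /
        (δ * ((e.totient : ℝ) / e)) := by
  haveI : NeZero p := ⟨hp.ne_zero⟩
  haveI hFact : Fact p.Prime := ⟨hp⟩
  have hp2 : 2 ≤ p := hp.two_le
  have hN0 : p - 1 ≠ 0 := by omega
  have he0 : e ≠ 0 := by rintro rfl; exact hN0 (Nat.eq_zero_of_zero_dvd he)
  have hα : (n : ZMod p) ≠ 0 := by
    rw [Ne, ZMod.intCast_zmod_eq_zero_iff_dvd]; exact hn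
  have hτdvd : orderOf ((n : ZMod p)) ∣ p - 1 :=
    orderOf_dvd_of_pow_eq_one (ZMod.pow_card_sub_one_eq_one hα)
  set u : ℕ := (p - 1) / orderOf ((n : ZMod p)) with hudef
  have hu_dvd : u ∣ p - 1 := Nat.div_dvd_of_dvd hτdvd
  have hPfact : ∀ q ∈ P, q.Prime ∧ ¬ q ∣ e ∧ q ∣ p - 1 := by
    intro q hq; rw [hP, Finset.mem_filter] at hq
    exact ⟨Nat.prime_of_mem_primeFactors hq.1, hq.2, Nat.dvd_of_mem_primeFactors hq.1⟩
  have hδme : (δ : ℂ) ≠ 0 := by exact_mod_cast hδ.ne'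
  set tr : ℝ := ((P.filter (fun q => q ∣ u)).card : ℝ) with htr
  set Wr : ℝ := ∏ q ∈ e.primeFactors, (if q ∣ u then (0:ℝ) else q / (q - 1)) with hWr
  set rv : ℕ → ℝ := fun q => if q ∣ u then 1/q - 1 else 1/q with hrv
  have hprodreal : ∏ q ∈ e.primeFactors,
      ((1:ℂ) - ((if q ∣ u then (q : ℂ) else 0) - 1) / ((q : ℂ) - 1)) = ((Wr : ℝ) : ℂ) := by
    rw [hWr]
    push_cast
    apply Finset.prod_congr rfl
    intro q hq
    have hq2 : 2 ≤ q := (Nat.prime_of_mem_primeFactors hq).two_le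
    have hq1 : ((q:ℂ) - 1) ≠ 0 := sub_ne_zero.mpr (by exact_mod_cast (by omega : q ≠ 1))
    by_cases hqu : q ∣ u
    · simp only [if_pos hqu]
      rw [div_self hq1]; norm_num
    · simp only [if_neg hqu]
      push_cast
      rw [eq_div_iff hq1, sub_mul, div_mul_cancel₀ _ hq1]; ring
  have hWfull : ∑ d ∈ e.divisors,
      ((ArithmeticFunction.moebius d : ℂ) / (d.totient)) * charOrderSum p d n
      = ((Wr : ℝ) : ℂ) := by
    have h1 := sumdiv p hp n hα he he0 squarefree_one (one_dvd _) (Nat.coprime_one_left e)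
    rw [← hudef] at h1
    simp only [one_mul, ArithmeticFunction.moebius_apply_one, Nat.totient_one,
      Nat.primeFactors_one, Finset.prod_empty, Nat.cast_one, Int.cast_one] at h1
    rw [h1, ← hprodreal]
    norm_num
  have hS1 : charOrderSum p 1 n = 1 := by
    have hfilt : (Finset.univ.filter (fun χ : DirichletCharacter ℂ p => orderOf χ = 1))
        = {1} := by
      ext χ; simp [orderOf_eq_one_iff]
    rw [charOrderSum, hfilt, Finset.sum_singleton]
    exact MulChar.one_apply (isUnit_iff_ne_zero.mpr hα)
  have hB' : ∑ d ∈ e.divisors.filter (1 < ·),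
      ((ArithmeticFunction.moebius d : ℂ) / (d.totient)) * charOrderSum p d n
      = ((Wr : ℝ) : ℂ) - 1 := by
    have hfilter : e.divisors.filter (1 < ·) = e.divisors.erase 1 := by
      ext d
      simp only [Finset.mem_filter, Finset.mem_erase, Nat.mem_divisors]
      constructor
      · rintro ⟨h1, h2⟩; exact ⟨by omega, h1⟩
      · rintro ⟨h1, h2⟩
        refine ⟨h2, ?_⟩
        rcases Nat.eq_zero_or_pos d with h0 | h0
        · exact absurd (Nat.eq_zero_of_zero_dvd (h0 ▸ h2.1)) he0
        · omega
    rw [hfilter, Finset.sum_erase_eq_sub (Nat.one_mem_divisors.mpr he0), hWfull]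
    simp [hS1]
  have hθA : ∀ q ∈ P, ((q.totient : ℂ) / q) *
      (∑ d ∈ e.divisors, ((ArithmeticFunction.moebius (q * d) : ℂ) / ((q * d).totient)) *
        charOrderSum p (q * d) n)
      = ((rv q : ℝ) : ℂ) * ((Wr : ℝ) : ℂ) := by
    intro q hq
    obtain ⟨hqp, hqe, hqN⟩ := hPfact q hq
    have hq0 : (q : ℂ) ≠ 0 := by exact_mod_cast hqp.pos.ne'
    have hq1 : ((q:ℂ) - 1) ≠ 0 := sub_ne_zero.mpr (by exact_mod_cast hqp.one_lt.ne')
    have h1 := sumdiv p hp n hα he he0 hqp.squarefree hqN (hqp.coprime_iff_not_dvd.mpr hqe)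
    rw [← hudef] at h1
    rw [h1, hprodreal, ArithmeticFunction.moebius_apply_prime hqp, hqp.primeFactors,
      Finset.prod_singleton, Nat.totient_prime hqp]
    have hcast : (((q - 1 : ℕ)) : ℂ) = (q : ℂ) - 1 := by
      push_cast [Nat.cast_sub hqp.one_lt.le]; ring
    rw [hcast]
    by_cases hqu : q ∣ u
    · simp only [if_pos hqu, hrv]
      push_cast
      field_simp
      ring
    · simp only [if_neg hqu, hrv]
      push_cast
      field_simp
      ring
  rw [Finset.sum_congr rfl hθA, hB']
  have hrvsum : ∑ q ∈ P, rv q = 1 - δ - tr := by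
    have hterm : ∀ q ∈ P, rv q = 1/(q:ℝ) - (if q ∣ u then 1 else 0) := by
      intro q hq
      by_cases hqu : q ∣ u
      · simp [hrv, hqu]
      · simp [hrv, hqu]
    rw [Finset.sum_congr rfl hterm, Finset.sum_sub_distrib, Finset.sum_boole]
    have h2 : ∑ q ∈ P, (1:ℝ)/q = 1 - δ := by rw [hδdef]; ring
    rw [h2, htr]
  have hsumrv : ∑ q ∈ P, (((rv q : ℝ) : ℂ) * ((Wr : ℝ) : ℂ))
      = (((1 - δ - tr) * Wr : ℝ) : ℂ) := by
    rw [← Finset.sum_mul]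
    have h3 : ∑ q ∈ P, ((rv q : ℝ) : ℂ) = ((1 - δ - tr : ℝ) : ℂ) := by
      rw [← Complex.ofReal_sum, hrvsum]
    rw [h3, ← Complex.ofReal_mul]
  rw [hsumrv]
  have hfold : (1 + 1/(δ:ℂ) * (((1 - δ - tr) * Wr : ℝ) : ℂ) + (((Wr : ℝ) : ℂ) - 1))
      = ((Wr * (1 - tr)/δ : ℝ) : ℂ) := by
    push_cast
    field_simp
    ring
  rw [hfold, Complex.ofReal_re]
  -- now a purely real inequality
  by_cases hu1 : u = 1
  · have hτN : orderOf ((n : ZMod p)) = p - 1 := by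
      have h1 : (p - 1) / orderOf ((n : ZMod p)) * orderOf ((n : ZMod p)) = p - 1 :=
        Nat.div_mul_cancel hτdvd
      rw [← hudef, hu1, one_mul] at h1
      exact h1
    rw [if_pos hτN]
    have htr0 : tr = 0 := by
      rw [htr]
      norm_cast
      rw [Finset.card_eq_zero, Finset.filter_eq_empty_iff]
      intro q hq
      intro hqu
      exact ((hPfact q hq).1.one_lt.ne') (Nat.dvd_one.mp (hu1 ▸ hqu))
    have hφe0 : (e.totient:ℝ) ≠ 0 := by
      exact_mod_cast (Nat.totient_pos.mpr (Nat.pos_of_ne_zero he0)).ne'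
    have heR0 : (e:ℝ) ≠ 0 := by exact_mod_cast he0
    have hprod1 : (∏ q ∈ e.primeFactors, ((q:ℝ) - 1)) ≠ 0 := by
      rw [Finset.prod_ne_zero_iff]
      intro q hq
      have hq2 : 2 ≤ q := (Nat.prime_of_mem_primeFactors hq).two_le
      have : (1:ℝ) < (q:ℝ) := by exact_mod_cast (Nat.prime_of_mem_primeFactors hq).one_lt
      linarith [sub_ne_zero.mpr this.ne']
    have hkey : (e.totient:ℝ) * ∏ q ∈ e.primeFactors, (q:ℝ)
        = (e:ℝ) * ∏ q ∈ e.primeFactors, ((q:ℝ) - 1) := by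
      have hc : ((e.totient * ∏ q ∈ e.primeFactors, q : ℕ) : ℝ)
          = ((e * ∏ q ∈ e.primeFactors, (q - 1) : ℕ) : ℝ) := by
        exact_mod_cast congrArg (Nat.cast : ℕ → ℝ) (Nat.totient_mul_prod_primeFactors e)
      push_cast at hc
      rw [hc]
      congr 1
      apply Finset.prod_congr rfl
      intro q hq
      rw [Nat.cast_sub (Nat.prime_of_mem_primeFactors hq).one_lt.le, Nat.cast_one]
    have hWre : Wr = (e:ℝ)/(e.totient:ℝ) := by
      rw [hWr]
      have h4 : ∀ q ∈ e.primeFactors, (if q ∣ u then (0:ℝ) else q / (q - 1)) = (q:ℝ)/((q:ℝ)-1) := by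
        intro q hq
        rw [if_neg]
        intro hqu
        exact ((Nat.prime_of_mem_primeFactors hq).one_lt.ne') (Nat.dvd_one.mp (hu1 ▸ hqu))
      rw [Finset.prod_congr rfl h4, Finset.prod_div_distrib, div_eq_div_iff hprod1 hφe0]
      linarith [hkey]
    rw [htr0, hWre]
    apply le_of_eq
    rw [sub_zero, mul_one, div_div, one_div, ← mul_div_assoc, inv_div,
      mul_comm (e.totient : ℝ) δ]
  · have hτne : orderOf ((n : ZMod p)) ≠ p - 1 := by
      intro h
      apply hu1
      rw [hudef, h, Nat.div_self (Nat.pos_of_ne_zero hN0)]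
    rw [if_neg hτne, zero_div]
    obtain ⟨r, hrp, hru⟩ := Nat.exists_prime_and_dvd hu1
    have hrN : r ∣ p - 1 := hru.trans hu_dvd
    by_cases hre : r ∣ e
    · have hrmem : r ∈ e.primeFactors := Nat.mem_primeFactors.mpr ⟨hrp, hre, he0⟩
      have hWr0 : Wr = 0 := by
        rw [hWr]
        exact Finset.prod_eq_zero hrmem (if_pos hru)
      rw [hWr0]
      simp
    · have hrP : r ∈ P := by
        rw [hP, Finset.mem_filter]
        exact ⟨Nat.mem_primeFactors.mpr ⟨hrp, hrN, hN0⟩, hre⟩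
      have htr1 : (1:ℝ) ≤ tr := by
        rw [htr]
        have hmem : r ∈ P.filter (fun q => q ∣ u) := Finset.mem_filter.mpr ⟨hrP, hru⟩
        exact_mod_cast Nat.one_le_iff_ne_zero.mpr (Finset.card_pos.mpr ⟨r, hmem⟩).ne'
      have hWrnn : 0 ≤ Wr := by
        rw [hWr]
        apply Finset.prod_nonneg
        intro q hq
        by_cases hqu : q ∣ u
        · simp [hqu]
        · simp only [if_neg hqu]
          have hq1 : (1:ℝ) ≤ (q:ℝ) := by
            exact_mod_cast (Nat.prime_of_mem_primeFactors hq).one_lt.le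
          apply div_nonneg (by positivity)
          linarith
      have hmul : Wr * (1 - tr) ≤ 0 :=
        mul_nonpos_of_nonneg_of_nonpos hWrnn (by linarith)
      exact div_nonpos_of_nonpos_of_nonneg hmul hδ.le
end
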